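/- Let (L_t)_{t ≥ 1} be independent, identically distributed, strictly positive (a.s.), integrable random variables with E[L_1] = 1. Define R_0 = 0, R_{t+1} = (1 + R_t) · L_{t+1}, and for B > 0 let T_B = inf{ t ≥ 1 : R_t ≥ B } (with inf ∅ = ∞). Then E[T_B] ≥ B. -/

import Mathlib

open MeasureTheory ProbabilityTheory
open scoped ENNReal

noncomputable section

namespace QCDStmt

/-- The Shiryaev–Roberts recursion `R 0 = 0`, `R (t+1) = (1 + R t) · L t`
(here `L t` is the likelihood ratio of the `(t+1)`-st observation). -/
def srStat {Ω : Type*} (L : ℕ → Ω → ℝ) : ℕ → Ω → ℝ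
  | 0 => fun _ => 0
  | t + 1 => fun ω => (1 + srStat L t ω) * L t ω

/-- The hitting time `T_B = inf {t ≥ 1 : R t ≥ B}` (with `inf ∅ = ∞`). -/
def srHit {Ω : Type*} (L : ℕ → Ω → ℝ) (B : ℝ) (ω : Ω) : ℕ∞ :=
  sInf {s : ℕ∞ | ∃ t : ℕ, s = (t : ℕ∞) ∧ 1 ≤ t ∧ B ≤ srStat L t ω}

section Aux

open Filter

set_option linter.unusedSectionVars false

variable {Ω : Type*}

lemma srStat_zero (L : ℕ → Ω → ℝ) : srStat L 0 = fun _ => 0 := rfl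

lemma srStat_succ (L : ℕ → Ω → ℝ) (t : ℕ) :
    srStat L (t + 1) = fun ω => (1 + srStat L t ω) * L t ω := rfl

/-- The event `T_B > n`. -/
def srC (L : ℕ → Ω → ℝ) (B : ℝ) (n : ℕ) : Set Ω :=
  {ω | ∀ t, 1 ≤ t → t ≤ n → srStat L t ω < B}

lemma mem_srC_iff {L : ℕ → Ω → ℝ} {B : ℝ} {n : ℕ} {ω : Ω} :
    ω ∈ srC L B n ↔ (n : ℕ∞) < srHit L B ω := by
  have hcast : ∀ m : ℕ∞, (n : ℕ∞) + 1 ≤ m ↔ (n : ℕ∞) < m := fun m =>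
    ENat.add_one_le_iff (by exact_mod_cast WithTop.coe_ne_top)
  have h1 : (n : ℕ∞) < srHit L B ω ↔ ∀ t : ℕ, 1 ≤ t → B ≤ srStat L t ω → n < t := by
    rw [srHit, ← hcast, le_sInf_iff]
    constructor
    · intro h t ht hBt
      have := (hcast _).mp (h (t : ℕ∞) ⟨t, rfl, ht, hBt⟩)
      exact_mod_cast this
    · rintro h s ⟨t, rfl, ht, hBt⟩
      exact (hcast _).mpr (by exact_mod_cast h t ht hBt)
  rw [h1]
  constructor
  · intro hω t ht hBt
    by_contra hn
    exact absurd hBt (not_le.mpr (hω t ht (not_lt.mp hn)))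
  · intro h t ht htn
    by_contra hR
    exact absurd htn (not_le.mpr (h t ht (not_lt.mp hR)))

lemma srC_antitone (L : ℕ → Ω → ℝ) (B : ℝ) : Antitone (srC L B) := by
  intro m n hmn ω hω t ht htm
  exact hω t ht (htm.trans hmn)

lemma srC_zero (L : ℕ → Ω → ℝ) (B : ℝ) : srC L B 0 = Set.univ := by
  ext ω; simp only [srC, Set.mem_setOf_eq, Set.mem_univ, iff_true]
  intro t ht ht0; omega

lemma srStat_succ_of_mem_diff {L : ℕ → Ω → ℝ} {B : ℝ} {n : ℕ} {ω : Ω}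
    (hω : ω ∈ srC L B n \ srC L B (n + 1)) : B ≤ srStat L (n + 1) ω := by
  obtain ⟨h1, h2⟩ := hω
  simp only [srC, Set.mem_setOf_eq, not_forall, not_lt] at h2
  obtain ⟨t, ht, htn, hBt⟩ := h2
  rcases Nat.lt_or_ge t (n + 1) with h | h
  · exact absurd hBt (not_le.mpr (h1 t ht (by omega)))
  · have : t = n + 1 := le_antisymm htn h
    rwa [this] at hBt

variable [MeasurableSpace Ω] {P : Measure Ω} [IsProbabilityMeasure P] {L : ℕ → Ω → ℝ}

lemma srStat_measurable (hmeas : ∀ t, Measurable (L t)) (n : ℕ) :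
    Measurable (srStat L n) := by
  induction n with
  | zero => rw [srStat_zero]; exact measurable_const
  | succ n ih => rw [srStat_succ]; exact (measurable_const.add ih).mul (hmeas n)

lemma srC_measurableSet (hmeas : ∀ t, Measurable (L t)) (B : ℝ) (n : ℕ) :
    MeasurableSet (srC L B n) := by
  have : srC L B n = ⋂ (t : ℕ) (_ : 1 ≤ t) (_ : t ≤ n), (srStat L t) ⁻¹' Set.Iio B := by
    ext ω; simp [srC]
  rw [this]
  exact MeasurableSet.iInter fun t => MeasurableSet.iInter fun _ =>
    MeasurableSet.iInter fun _ => (srStat_measurable hmeas t) measurableSet_Iio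

/-- The sub-σ-algebra generated by `L 0, …, L (n-1)`. -/
def srF (L : ℕ → Ω → ℝ) (n : ℕ) : MeasurableSpace Ω :=
  ⨆ i ∈ Set.Iio n, MeasurableSpace.comap (L i) inferInstance

lemma measurable_srF_L (i n : ℕ) (h : i < n) : Measurable[srF L n] (L i) :=
  measurable_iff_comap_le.mpr
    (le_biSup (fun i => MeasurableSpace.comap (L i) inferInstance) (Set.mem_Iio.mpr h))

lemma indepFun_of_measurable_srF (hmeas : ∀ t, Measurable (L t))
    (hindep : iIndepFun L P) (n : ℕ)
    {g : Ω → ℝ} (hg : Measurable[srF L n] g) : IndepFun g (L n) P := by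
  have h := indep_iSup_of_disjoint
    (m := fun i => MeasurableSpace.comap (L i) (inferInstance : MeasurableSpace ℝ))
    (fun i => measurable_iff_comap_le.mp (hmeas i)) hindep
    (S := Set.Iio n) (T := {n}) (by simp)
  have h' : Indep (srF L n) (MeasurableSpace.comap (L n) inferInstance) P := by simpa [srF] using h
  exact indep_of_indep_of_le_left h' (measurable_iff_comap_le.mp hg)

lemma srStat_measurable_srF {n N : ℕ} (h : n ≤ N) : Measurable[srF L N] (srStat L n) := by
  induction n with
  | zero => rw [srStat_zero]; exact measurable_const
  | succ n ih =>
    rw [srStat_succ]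
    exact (measurable_const.add (ih (by omega))).mul (measurable_srF_L n N (by omega))

lemma srC_measurableSet_srF (B : ℝ) (n : ℕ) : MeasurableSet[srF L n] (srC L B n) := by
  have : srC L B n = ⋂ (t : ℕ) (_ : 1 ≤ t) (_ : t ≤ n), (srStat L t) ⁻¹' Set.Iio B := by
    ext ω; simp [srC]
  rw [this]
  exact MeasurableSet.iInter fun t => MeasurableSet.iInter fun _ =>
    MeasurableSet.iInter fun ht => (srStat_measurable_srF ht) measurableSet_Iio

lemma integrable_L (hmeas : ∀ t, Measurable (L t))
    (hident : ∀ t, Measure.map (L t) P = Measure.map (L 0) P)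
    (hint : Integrable (L 0) P) (t : ℕ) : Integrable (L t) P := by
  have h0 : Integrable id (Measure.map (L 0) P) :=
    (integrable_map_measure aestronglyMeasurable_id (hmeas 0).aemeasurable).mpr hint
  have ht : Integrable id (Measure.map (L t) P) := by rw [hident t]; exact h0
  exact (integrable_map_measure aestronglyMeasurable_id (hmeas t).aemeasurable).mp ht

lemma integral_L (hmeas : ∀ t, Measurable (L t))
    (hident : ∀ t, Measure.map (L t) P = Measure.map (L 0) P)
    (hmean : ∫ ω, L 0 ω ∂P = 1) (t : ℕ) : ∫ ω, L t ω ∂P = 1 := by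
  have h1 : ∫ ω, L t ω ∂P = ∫ x, id x ∂(Measure.map (L t) P) :=
    (integral_map (hmeas t).aemeasurable aestronglyMeasurable_id).symm
  have h2 : ∫ x, id x ∂(Measure.map (L 0) P) = ∫ ω, L 0 ω ∂P :=
    integral_map (hmeas 0).aemeasurable aestronglyMeasurable_id
  rw [h1, hident t, h2, hmean]

lemma integrable_srStat (hmeas : ∀ t, Measurable (L t))
    (hindep : iIndepFun L P)
    (hident : ∀ t, Measure.map (L t) P = Measure.map (L 0) P)
    (hint : Integrable (L 0) P) (n : ℕ) : Integrable (srStat L n) P := by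
  induction n with
  | zero => rw [srStat_zero]; exact integrable_const 0
  | succ n ih =>
    have h1 : Integrable (fun ω => 1 + srStat L n ω) P := (integrable_const 1).add ih
    have hF : Measurable[srF L n] (fun ω => 1 + srStat L n ω) :=
      measurable_const.add (srStat_measurable_srF le_rfl)
    have := (indepFun_of_measurable_srF hmeas hindep n hF).integrable_mul h1
      (integrable_L hmeas hident hint n)
    rw [srStat_succ]
    exact this

/-- The key one-step supermartingale inequality. -/
lemma sr_step (hmeas : ∀ t, Measurable (L t))
    (hindep : iIndepFun L P)
    (hident : ∀ t, Measure.map (L t) P = Measure.map (L 0) P)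
    (hint : Integrable (L 0) P) (hmean : ∫ ω, L 0 ω ∂P = 1) (B : ℝ) (n : ℕ) :
    B * ((P (srC L B n)).toReal - (P (srC L B (n+1))).toReal)
      + ∫ ω, (srC L B (n+1)).indicator (srStat L (n+1)) ω ∂P
    ≤ (P (srC L B n)).toReal + ∫ ω, (srC L B n).indicator (srStat L n) ω ∂P := by
  have hCm : ∀ k, MeasurableSet (srC L B k) := srC_measurableSet hmeas B
  have hintR : ∀ k, Integrable (srStat L k) P := integrable_srStat hmeas hindep hident hint
  have hintR1 : Integrable (fun ω => 1 + srStat L n ω) P := (integrable_const 1).add (hintR n)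
  set g : Ω → ℝ := (srC L B n).indicator (fun ω => 1 + srStat L n ω) with hg
  have hgF : Measurable[srF L n] g :=
    (measurable_const.add (srStat_measurable_srF le_rfl)).indicator (srC_measurableSet_srF B n)
  have hgInt : Integrable g P := hintR1.indicator (hCm n)
  have hIndep : IndepFun g (L n) P := indepFun_of_measurable_srF hmeas hindep n hgF
  have key1 : ∫ ω, (srC L B n).indicator (srStat L (n+1)) ω ∂P = ∫ ω, g ω ∂P := by
    have hfun : (srC L B n).indicator (srStat L (n+1)) = g * L n := by
      funext ω
      by_cases hω : ω ∈ srC L B n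
      · simp [hg, Set.indicator_of_mem hω, srStat_succ, Pi.mul_apply]
      · simp [hg, Set.indicator_of_notMem hω, Pi.mul_apply]
    rw [hfun]
    rw [show ∫ ω, (g * L n) ω ∂P = (∫ ω, g ω ∂P) * ∫ ω, L n ω ∂P from
      hIndep.integral_mul_eq_mul_integral hgInt.aestronglyMeasurable
        (integrable_L hmeas hident hint n).aestronglyMeasurable,
      integral_L hmeas hident hmean n, mul_one]
  have key2 : ∫ ω, g ω ∂P
      = (P (srC L B n)).toReal + ∫ ω, (srC L B n).indicator (srStat L n) ω ∂P := by
    have heq : ∫ ω, g ω ∂P = ∫ ω, ((srC L B n).indicator (fun _ => (1:ℝ)) ω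
        + (srC L B n).indicator (srStat L n) ω) ∂P := by
      congr 1
      funext ω
      by_cases hω : ω ∈ srC L B n
      · simp [hg, Set.indicator_of_mem hω]
      · simp [hg, Set.indicator_of_notMem hω]
    rw [heq, integral_add ((integrable_const 1).indicator (hCm n)) ((hintR n).indicator (hCm n)),
      integral_indicator_const (1:ℝ) (hCm n)]
    simp
    rfl
  have hsub : srC L B (n+1) ⊆ srC L B n := srC_antitone L B (Nat.le_succ n)
  set D := srC L B n \ srC L B (n+1) with hD
  have hDm : MeasurableSet D := (hCm n).diff (hCm (n+1))
  have hsplit : ∫ ω, (srC L B n).indicator (srStat L (n+1)) ω ∂P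
      = ∫ ω, (srC L B (n+1)).indicator (srStat L (n+1)) ω ∂P
        + ∫ ω, D.indicator (srStat L (n+1)) ω ∂P := by
    rw [← integral_add ((hintR (n+1)).indicator (hCm (n+1))) ((hintR (n+1)).indicator hDm)]
    congr 1
    funext ω
    by_cases h1 : ω ∈ srC L B (n+1)
    · have h2 : ω ∈ srC L B n := hsub h1
      have h3 : ω ∉ D := fun h => h.2 h1
      simp [Set.indicator_of_mem, Set.indicator_of_notMem, h1, h2, h3]
    · by_cases h2 : ω ∈ srC L B n
      · have h3 : ω ∈ D := ⟨h2, h1⟩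
        simp [Set.indicator_of_mem, Set.indicator_of_notMem, h1, h2, h3]
      · have h3 : ω ∉ D := fun h => h2 h.1
        simp [Set.indicator_of_notMem, h1, h2, h3]
  have hDineq : B * ((P (srC L B n)).toReal - (P (srC L B (n+1))).toReal)
      ≤ ∫ ω, D.indicator (srStat L (n+1)) ω ∂P := by
    have hPD : (P D).toReal = (P (srC L B n)).toReal - (P (srC L B (n+1))).toReal := by
      rw [hD, measure_diff hsub (hCm (n+1)).nullMeasurableSet (measure_ne_top P _),
        ENNReal.toReal_sub_of_le (measure_mono hsub) (measure_ne_top P _)]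
    have h1 : ∫ ω, D.indicator (fun _ => B) ω ∂P
        = B * ((P (srC L B n)).toReal - (P (srC L B (n+1))).toReal) := by
      rw [integral_indicator_const B hDm, measureReal_def, hPD, smul_eq_mul, mul_comm]
    rw [← h1]
    refine integral_mono ((integrable_const B).indicator hDm) ((hintR (n+1)).indicator hDm) ?_
    intro ω
    by_cases hω : ω ∈ D
    · simpa [Set.indicator_of_mem hω] using srStat_succ_of_mem_diff (hD ▸ hω)
    · simp [Set.indicator_of_notMem hω]
  linarith [key1, key2, hsplit, hDineq]

end Aux

open Filter Topology in
/-- **Run length lower bound for the Shiryaev–Roberts procedure.** If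
`L 0, L 1, …` are i.i.d. a.s. strictly positive integrable random variables with mean `1`
(with `L t` playing the role of `L_{t+1}`) and `B > 0`, then `E[T_B] ≥ B`. -/
theorem shiryaev_roberts_run_length_lower_bound
    {Ω : Type*} [MeasurableSpace Ω] (P : Measure Ω) [IsProbabilityMeasure P]
    (L : ℕ → Ω → ℝ) (hmeas : ∀ t, Measurable (L t))
    (hindep : iIndepFun L P)
    (hident : ∀ t, Measure.map (L t) P = Measure.map (L 0) P)
    (hpos : ∀ t, ∀ᵐ ω ∂P, 0 < L t ω)
    (hint : Integrable (L 0) P) (hmean : ∫ ω, L 0 ω ∂P = 1)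
    (B : ℝ) (hB : 0 < B) :
    ENNReal.ofReal B ≤ ∫⁻ ω, (srHit L B ω : ℝ≥0∞) ∂P := by
  classical
  have hCm : ∀ k, MeasurableSet (srC L B k) := srC_measurableSet hmeas B
  -- nonnegativity of the truncated means
  have hanonneg : ∀ n, 0 ≤ ∫ ω, (srC L B n).indicator (srStat L n) ω ∂P := by
    intro n
    have hae : ∀ᵐ ω ∂P, ∀ t, 0 < L t ω := ae_all_iff.mpr hpos
    refine integral_nonneg_of_ae ?_
    filter_upwards [hae] with ω hω
    have hR : ∀ k, 0 ≤ srStat L k ω := by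
      intro k; induction k with
      | zero => rw [srStat_zero]
      | succ k ih => rw [srStat_succ]; exact mul_nonneg (by linarith) (hω k).le
    by_cases hmem : ω ∈ srC L B n
    · simpa [Set.indicator_of_mem hmem] using hR n
    · simp [Set.indicator_of_notMem hmem]
  -- the telescoped inequality
  have hkey : ∀ N, B * (1 - (P (srC L B N)).toReal)
      + ∫ ω, (srC L B N).indicator (srStat L N) ω ∂P
      ≤ ∑ n ∈ Finset.range N, (P (srC L B n)).toReal := by
    intro N
    induction N with
    | zero =>
      rw [srC_zero]
      simp [srStat_zero]
    | succ N ih =>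
      have hstep := sr_step hmeas hindep hident hint hmean B N
      rw [Finset.sum_range_succ]
      linarith [hstep, ih]
  have hkey' : ∀ N, B * (1 - (P (srC L B N)).toReal)
      ≤ ∑ n ∈ Finset.range N, (P (srC L B n)).toReal := by
    intro N; linarith [hkey N, hanonneg N]
  -- the sum of probabilities bounds the expectation from below
  have hsum_le : ∀ N, ∑ n ∈ Finset.range N, P (srC L B n)
      ≤ ∫⁻ ω, (srHit L B ω : ℝ≥0∞) ∂P := by
    intro N
    have hpt : ∀ ω, ∑ n ∈ Finset.range N, (srC L B n).indicator (1 : Ω → ℝ≥0∞) ω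
        ≤ (srHit L B ω : ℝ≥0∞) := by
      intro ω
      by_cases hT : srHit L B ω = ⊤
      · rw [hT]; exact le_top
      · lift srHit L B ω to ℕ using hT with k hk
        have hind : ∀ n, (srC L B n).indicator (1 : Ω → ℝ≥0∞) ω
            = if n < k then 1 else 0 := by
          intro n
          by_cases h : n < k
          · have hmem : ω ∈ srC L B n := mem_srC_iff.mpr (by rw [← hk]; exact_mod_cast h)
            simp [Set.indicator_of_mem hmem, h]
          · have hmem : ω ∉ srC L B n := fun hm => by
              have h2 := mem_srC_iff.mp hm
              rw [← hk] at h2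
              exact h (by exact_mod_cast h2)
            simp [Set.indicator_of_notMem hmem, h]
        rw [Finset.sum_congr rfl (fun n _ => hind n), Finset.sum_boole]
        have hcard : ((Finset.range N).filter (fun n => n < k)).card ≤ k := by
          calc ((Finset.range N).filter (fun n => n < k)).card
              ≤ (Finset.range k).card := Finset.card_le_card (fun n hn => by
                simp only [Finset.mem_filter, Finset.mem_range] at hn ⊢
                exact hn.2)
            _ = k := Finset.card_range k
        calc (((Finset.range N).filter (fun n => n < k)).card : ℝ≥0∞)
            ≤ (k : ℝ≥0∞) := by exact_mod_cast hcard
          _ = ((k : ℕ∞) : ℝ≥0∞) := by simp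
    calc ∑ n ∈ Finset.range N, P (srC L B n)
        = ∑ n ∈ Finset.range N, ∫⁻ ω, (srC L B n).indicator (1 : Ω → ℝ≥0∞) ω ∂P :=
          Finset.sum_congr rfl fun n _ => (lintegral_indicator_one (hCm n)).symm
      _ = ∫⁻ ω, ∑ n ∈ Finset.range N, (srC L B n).indicator (1 : Ω → ℝ≥0∞) ω ∂P :=
          (lintegral_finset_sum _ fun n _ => measurable_one.indicator (hCm n)).symm
      _ ≤ ∫⁻ ω, (srHit L B ω : ℝ≥0∞) ∂P := lintegral_mono hpt
  by_cases hcap : P (⋂ n, srC L B n) = 0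
  · -- the hitting time is a.s. finite enough: take limits
    have hten : Tendsto (fun N => P (srC L B N)) atTop (𝓝 0) := by
      have h := tendsto_measure_iInter_atTop (μ := P)
        (fun n => (hCm n).nullMeasurableSet) (srC_antitone L B) ⟨0, measure_ne_top P _⟩
      rw [hcap] at h
      exact h
    have hqten : Tendsto (fun N => (P (srC L B N)).toReal) atTop (𝓝 0) := by
      have h := (ENNReal.tendsto_toReal (a := 0) (by simp)).comp hten
      rw [ENNReal.toReal_zero] at h
      exact h
    have hlim : Tendsto (fun N => ENNReal.ofReal (B * (1 - (P (srC L B N)).toReal)))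
        atTop (𝓝 (ENNReal.ofReal B)) := by
      have h1 : Tendsto (fun N => B * (1 - (P (srC L B N)).toReal)) atTop (𝓝 (B * (1 - 0))) :=
        tendsto_const_nhds.mul (tendsto_const_nhds.sub hqten)
      rw [sub_zero, mul_one] at h1
      exact (ENNReal.continuous_ofReal.tendsto B).comp h1
    refine le_of_tendsto hlim (Eventually.of_forall fun N => ?_)
    calc ENNReal.ofReal (B * (1 - (P (srC L B N)).toReal))
        ≤ ENNReal.ofReal (∑ n ∈ Finset.range N, (P (srC L B n)).toReal) :=
          ENNReal.ofReal_le_ofReal (hkey' N)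
      _ = ∑ n ∈ Finset.range N, ENNReal.ofReal ((P (srC L B n)).toReal) :=
          ENNReal.ofReal_sum_of_nonneg fun n _ => ENNReal.toReal_nonneg
      _ = ∑ n ∈ Finset.range N, P (srC L B n) :=
          Finset.sum_congr rfl fun n _ => ENNReal.ofReal_toReal (measure_ne_top P _)
      _ ≤ _ := hsum_le N
  · -- the hitting time is infinite on a set of positive measure
    have htop : ∀ ω ∈ ⋂ n, srC L B n, srHit L B ω = ⊤ := by
      intro ω hω
      by_contra hne
      lift srHit L B ω to ℕ using hne with k hk
      have h2 := mem_srC_iff.mp (Set.mem_iInter.mp hω k)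
      rw [← hk] at h2
      exact lt_irrefl _ h2
    have hMeasI : MeasurableSet (⋂ n, srC L B n) := MeasurableSet.iInter fun n => hCm n
    have hle : ∫⁻ ω, (⋂ n, srC L B n).indicator (fun _ => (⊤:ℝ≥0∞)) ω ∂P
        ≤ ∫⁻ ω, (srHit L B ω : ℝ≥0∞) ∂P := by
      refine lintegral_mono fun ω => ?_
      by_cases hω : ω ∈ ⋂ n, srC L B n
      · rw [Set.indicator_of_mem hω, htop ω hω]; simp
      · simp [Set.indicator_of_notMem hω]
    rw [lintegral_indicator_const hMeasI] at hle
    rw [ENNReal.top_mul hcap] at hle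
    exact le_top.trans hle

end QCDStmt
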